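/- arXiv:2112.01359 — 3 statements merged into one kernel-verified Lean document; each statement's English description precedes it below -/
import Mathlib

section
/- The directional derivative of the map j : L¹(Ω) → ℝ, j(u) = ‖u‖_{L¹(Ω)}, at u in direction v is j'(u;v) = ∫_{Ω⁺_u} v dx − ∫_{Ω⁻_u} v dx + ∫_{Ω⁰_u} |v| dx, where Ω⁺_u = {u > 0}, Ω⁻_u = {u < 0}, Ω⁰_u = {u = 0}. -/
open MeasureTheory Filter Topology Set

/-- the directional derivative of `j(u) = ‖u‖_{L¹}` at `u` in direction `v`. -/
theorem directional_derivative_L1_norm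
    {Ω : Type*} [MeasurableSpace Ω] {ν : Measure Ω} [IsFiniteMeasure ν]
    (u v : Lp ℝ 1 ν) :
    Tendsto (fun lam : ℝ => (‖u + lam • v‖ - ‖u‖) / lam) (𝓝[>] (0 : ℝ))
      (𝓝 ((∫ x in {x | 0 < u x}, v x ∂ν) - (∫ x in {x | u x < 0}, v x ∂ν)
          + ∫ x in {x | u x = 0}, |v x| ∂ν)) := by
  have hu : Measurable (u : Ω → ℝ) := (Lp.stronglyMeasurable u).measurable
  have hv : Measurable (v : Ω → ℝ) := (Lp.stronglyMeasurable v).measurable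
  have hui : Integrable (u : Ω → ℝ) ν := L1.integrable_coeFn u
  have hvi : Integrable (v : Ω → ℝ) ν := L1.integrable_coeFn v
  set A : Set Ω := {x | 0 < u x} with hA
  set B : Set Ω := {x | u x < 0} with hB
  set C : Set Ω := {x | u x = 0} with hC
  have hAm : MeasurableSet A := measurableSet_lt measurable_const hu
  have hBm : MeasurableSet B := measurableSet_lt hu measurable_const
  have hCm : MeasurableSet C := hu (measurableSet_singleton 0)
  set g : Ω → ℝ := fun x =>
    A.indicator (fun x => v x) x + B.indicator (fun x => -v x) x
      + C.indicator (fun x => |v x|) x with hg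
  -- limit value equals ∫ g
  have hint : (∫ x in A, v x ∂ν) - (∫ x in B, v x ∂ν) + ∫ x in C, |v x| ∂ν
      = ∫ x, g x ∂ν := by
    have h1 : Integrable (fun x => A.indicator (fun x => v x) x) ν := hvi.indicator hAm
    have h2 : Integrable (fun x => B.indicator (fun x => -v x) x) ν := hvi.neg.indicator hBm
    have h3 : Integrable (fun x => C.indicator (fun x => |v x|) x) ν := hvi.abs.indicator hCm
    have h12 : Integrable (fun x => A.indicator (fun x => v x) x
        + B.indicator (fun x => -v x) x) ν := h1.add h2
    have e1 : ∫ x, g x ∂ν = (∫ x, (A.indicator (fun x => v x) x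
        + B.indicator (fun x => -v x) x) ∂ν) + ∫ x, C.indicator (fun x => |v x|) x ∂ν :=
      integral_add h12 h3
    have e2 : ∫ x, (A.indicator (fun x => v x) x + B.indicator (fun x => -v x) x) ∂ν
        = (∫ x, A.indicator (fun x => v x) x ∂ν) + ∫ x, B.indicator (fun x => -v x) x ∂ν :=
      integral_add h1 h2
    rw [e1, e2, integral_indicator hAm, integral_indicator hBm, integral_indicator hCm,
      integral_neg]
    ring
  rw [hint]
  -- rewrite the difference quotient as an integral
  have key : (fun lam : ℝ => (‖u + lam • v‖ - ‖u‖) / lam)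
      =ᶠ[𝓝[>] (0:ℝ)] fun lam => ∫ x, (|u x + lam * v x| - |u x|) / lam ∂ν := by
    filter_upwards [self_mem_nhdsWithin] with lam (hlam : (0:ℝ) < lam)
    have h1 : ‖u + lam • v‖ = ∫ x, |u x + lam * v x| ∂ν := by
      rw [L1.norm_eq_integral_norm]
      refine integral_congr_ae ?_
      filter_upwards [Lp.coeFn_add u (lam • v), Lp.coeFn_smul lam v] with x h h'
      rw [h, Pi.add_apply, h', Pi.smul_apply, Real.norm_eq_abs, smul_eq_mul]
    have h2 : ‖u‖ = ∫ x, |u x| ∂ν := by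
      rw [L1.norm_eq_integral_norm]; simp [Real.norm_eq_abs]
    have hai : Integrable (fun x => |u x + lam * v x|) ν :=
      (hui.add (hvi.const_mul lam)).abs
    rw [h1, h2, ← integral_sub hai hui.abs, ← integral_div]
  refine Tendsto.congr' key.symm ?_
  -- dominated convergence
  refine tendsto_integral_filter_of_dominated_convergence (fun x => |v x|) ?_ ?_ hvi.abs ?_
  · filter_upwards with lam
    exact (((hu.add (hv.const_mul lam)).abs.sub hu.abs).div_const lam).aestronglyMeasurable
  · filter_upwards [self_mem_nhdsWithin] with lam (hlam : (0:ℝ) < lam)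
    refine ae_of_all _ fun x => ?_
    rw [Real.norm_eq_abs, abs_div, abs_of_pos hlam]
    rw [div_le_iff₀ hlam]
    calc |(|u x + lam * v x| - |u x|)| ≤ |lam * v x| := by
          have := abs_abs_sub_abs_le_abs_sub (u x + lam * v x) (u x)
          simpa using this
      _ = |v x| * lam := by rw [abs_mul, abs_of_pos hlam]; ring
  · refine ae_of_all _ fun x => ?_
    rcases lt_trichotomy (u x) 0 with h | h | h
    · have hgx : g x = -v x := by
        simp [hg, hA, hB, hC, indicator_apply, not_lt.2 h.le, h, h.ne]
      rw [hgx]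
      have hev : (fun lam : ℝ => (|u x + lam * v x| - |u x|) / lam)
          =ᶠ[𝓝[>] (0:ℝ)] fun _ => (-v x : ℝ) := by
        have ht : Tendsto (fun lam : ℝ => lam * |v x|) (𝓝[>] 0) (𝓝 0) := by
          have h0 : Tendsto (fun lam : ℝ => lam * |v x|) (𝓝 0) (𝓝 (0 * |v x|)) :=
            (continuous_id.mul continuous_const).tendsto 0
          rw [zero_mul] at h0
          exact h0.mono_left nhdsWithin_le_nhds
        filter_upwards [self_mem_nhdsWithin, ht.eventually_lt_const (by linarith : (0:ℝ) < -u x)]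
          with lam (hlam : (0:ℝ) < lam) hsm
        have hb : lam * v x ≤ lam * |v x| := by
          have := le_abs_self (v x); nlinarith
        have hneg : u x + lam * v x < 0 := by linarith
        rw [abs_of_neg hneg, abs_of_neg h]
        field_simp
        ring
      exact Tendsto.congr' hev.symm tendsto_const_nhds
    · have hgx : g x = |v x| := by
        simp [hg, hA, hB, hC, indicator_apply, h]
      rw [hgx]
      have hev : (fun lam : ℝ => (|u x + lam * v x| - |u x|) / lam)
          =ᶠ[𝓝[>] (0:ℝ)] fun _ => (|v x| : ℝ) := by
        filter_upwards [self_mem_nhdsWithin] with lam (hlam : (0:ℝ) < lam)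
        rw [h, zero_add, abs_zero, sub_zero, abs_mul, abs_of_pos hlam]
        field_simp
      exact Tendsto.congr' hev.symm tendsto_const_nhds
    · have hgx : g x = v x := by
        simp [hg, hA, hB, hC, indicator_apply, h, not_lt.2 h.le, h.ne']
      rw [hgx]
      have hev : (fun lam : ℝ => (|u x + lam * v x| - |u x|) / lam)
          =ᶠ[𝓝[>] (0:ℝ)] fun _ => (v x : ℝ) := by
        have ht : Tendsto (fun lam : ℝ => lam * |v x|) (𝓝[>] 0) (𝓝 0) := by
          have h0 : Tendsto (fun lam : ℝ => lam * |v x|) (𝓝 0) (𝓝 (0 * |v x|)) :=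
            (continuous_id.mul continuous_const).tendsto 0
          rw [zero_mul] at h0
          exact h0.mono_left nhdsWithin_le_nhds
        filter_upwards [self_mem_nhdsWithin, ht.eventually_lt_const h]
          with lam (hlam : (0:ℝ) < lam) hsm
        have hb : -(lam * |v x|) ≤ lam * v x := by
          have := neg_abs_le (v x); nlinarith
        have hpos : 0 < u x + lam * v x := by linarith
        rw [abs_of_pos hpos, abs_of_pos h]
        field_simp
        ring
      exact Tendsto.congr' hev.symm tendsto_const_nhds
end

section
/- Let ū ∈ L²(Q) and μ̄ ∈ L²(Q) with Q = Ω × (0,T), and suppose ∫_Q μ̄ (u − ū) dx dt ≤ 0 for all u in U_ad = {u ∈ L^∞(0,T;L¹(Ω)) : ‖u(t)‖_{L¹(Ω)} ≤ γ for a.a. t}. Then for almost all t ∈ (0,T), ∫_Ω μ̄(x,t)(v(x) − ū(x,t)) dx ≤ 0 for all v in the closed L¹(Ω)-ball B_γ of radius γ centered at 0. -/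
open MeasureTheory Filter Topology Set
open scoped ENNReal NNReal Classical

lemma aux_integrable_mul {α : Type*} [MeasurableSpace α] {μ : Measure α} {f g : α → ℝ}
    (hf : MemLp f 2 μ) (hg : MemLp g 2 μ) : Integrable (fun x => f x * g x) μ := by
  refine Integrable.mono' ((hf.integrable_sq.add hg.integrable_sq).div_const 2)
    (hf.1.mul hg.1) ?_
  filter_upwards with x
  rw [Real.norm_eq_abs, abs_mul]
  simp only [Pi.add_apply]
  nlinarith [abs_nonneg (f x), abs_nonneg (g x), sq_abs (f x), sq_abs (g x),
    sq_nonneg (|f x| - |g x|)]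

lemma aux_ae_ae_of_ae_prod {α β : Type*} [MeasurableSpace α] [MeasurableSpace β]
    {μ : Measure α} {ν : Measure β} [SFinite μ] [SFinite ν] {P : α × β → Prop}
    (h : ∀ᵐ p ∂μ.prod ν, P p) : ∀ᵐ y ∂ν, ∀ᵐ x ∂μ, P (x, y) := by
  rw [← Measure.prod_swap] at h
  exact Measure.ae_ae_of_ae_prod (ae_of_ae_map measurable_swap.aemeasurable h)

/-- localization in time of the integrated variational inequality. -/
theorem localization_variational_inequality
    {Ω : Type*} [MeasurableSpace Ω] (ν : Measure Ω) [IsFiniteMeasure ν]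
    (T γ : ℝ) (hT : 0 < T) (hγ : 0 < γ)
    (ubar mubar : Ω × ℝ → ℝ)
    (hu2 : MemLp ubar 2 (ν.prod (volume.restrict (Set.Ioo (0:ℝ) T))))
    (hmu2 : MemLp mubar 2 (ν.prod (volume.restrict (Set.Ioo (0:ℝ) T))))
    (hu_ad : ∀ᵐ t ∂(volume.restrict (Set.Ioo (0:ℝ) T)),
      Integrable (fun x => ubar (x, t)) ν ∧ ∫ x, |ubar (x, t)| ∂ν ≤ γ)
    (hVI : ∀ u : Ω × ℝ → ℝ,
      AEMeasurable u (ν.prod (volume.restrict (Set.Ioo (0:ℝ) T))) →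
      (∀ᵐ t ∂(volume.restrict (Set.Ioo (0:ℝ) T)), ∫ x, |u (x, t)| ∂ν ≤ γ) →
      ∫ p, mubar p * (u p - ubar p) ∂(ν.prod (volume.restrict (Set.Ioo (0:ℝ) T))) ≤ 0) :
    ∀ᵐ t ∂(volume.restrict (Set.Ioo (0:ℝ) T)),
      ∀ v : Ω → ℝ, Integrable v ν → ∫ x, |v x| ∂ν ≤ γ →
        ∫ x, mubar (x, t) * (v x - ubar (x, t)) ∂ν ≤ 0 := by
  set ρ : Measure ℝ := volume.restrict (Set.Ioo (0:ℝ) T) with hρdef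
  haveI hρfin : IsFiniteMeasure ρ := by
    constructor
    rw [hρdef, Measure.restrict_apply_univ, Real.volume_Ioo]
    exact ENNReal.ofReal_lt_top
  set π : Measure (Ω × ℝ) := ν.prod ρ with hπdef
  -- measurable representatives
  obtain ⟨g, hg_meas, hg_ae⟩ : ∃ g, StronglyMeasurable g ∧ mubar =ᵐ[π] g :=
    ⟨hmu2.1.mk mubar, hmu2.1.stronglyMeasurable_mk, hmu2.1.ae_eq_mk⟩
  obtain ⟨f, hf_meas, hf_ae⟩ : ∃ f, StronglyMeasurable f ∧ ubar =ᵐ[π] f :=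
    ⟨hu2.1.mk ubar, hu2.1.stronglyMeasurable_mk, hu2.1.ae_eq_mk⟩
  have hg2 : MemLp g 2 π := hmu2.ae_eq hg_ae
  have hf2 : MemLp f 2 π := hu2.ae_eq hf_ae
  have hgm : Measurable g := hg_meas.measurable
  have hfm : Measurable f := hf_meas.measurable
  have hg_int : Integrable g π := hg2.integrable one_le_two
  have hgf_int : Integrable (fun p => g p * f p) π := aux_integrable_mul hg2 hf2
  have h_slice_g_int : ∀ᵐ t ∂ρ, Integrable (fun x => g (x, t)) ν := hg_int.prod_left_ae
  have h_slice_gf_int : ∀ᵐ t ∂ρ, Integrable (fun x => g (x, t) * f (x, t)) ν :=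
    hgf_int.prod_left_ae
  have h_slice_g_eq : ∀ᵐ t ∂ρ, ∀ᵐ x ∂ν, mubar (x, t) = g (x, t) :=
    aux_ae_ae_of_ae_prod hg_ae
  have h_slice_f_eq : ∀ᵐ t ∂ρ, ∀ᵐ x ∂ν, ubar (x, t) = f (x, t) :=
    aux_ae_ae_of_ae_prod hf_ae
  have hf_ad : ∀ᵐ t ∂ρ, ∫ x, |f (x, t)| ∂ν ≤ γ := by
    filter_upwards [hu_ad, h_slice_f_eq] with t ht hteq
    have : ∫ x, |f (x, t)| ∂ν = ∫ x, |ubar (x, t)| ∂ν := by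
      refine integral_congr_ae ?_
      filter_upwards [hteq] with x hx using by rw [hx]
    rw [this]; exact ht.2
  -- the key pointwise estimate, for each pair of positive rationals
  have key : ∀ q ε : ℚ, 0 < q → 0 < ε →
      ∀ᵐ t ∂ρ, (ε : ℝ) ≤ (ν {x | (q : ℝ) < |g (x, t)|}).toReal →
        γ * q ≤ ∫ x, g (x, t) * f (x, t) ∂ν := by
    intro q ε hq hε
    have hεR : (0:ℝ) < (ε:ℝ) := by exact_mod_cast hε
    have hqR : (0:ℝ) < (q:ℝ) := by exact_mod_cast hq
    set A : Set (Ω × ℝ) := {p | (q : ℝ) < |g p|} with hA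
    have hA_meas : MeasurableSet A := measurableSet_lt measurable_const hgm.abs
    set m : ℝ → ℝ≥0∞ := fun t => ν ((fun x => (x, t)) ⁻¹' A) with hm
    have hm_meas : Measurable m := measurable_measure_prodMk_right hA_meas
    set D : ℝ → ℝ := fun t => max (m t).toReal (ε : ℝ) with hD
    have hD_meas : Measurable D := hm_meas.ennreal_toReal.max measurable_const
    have hD_pos : ∀ t, 0 < D t := fun t => lt_of_lt_of_le hεR (le_max_right _ _)
    set w : Ω × ℝ → ℝ :=
      fun p => if p ∈ A then (γ / D p.2) * (if 0 ≤ g p then 1 else -1) else 0 with hw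
    have hw_meas : Measurable w := by
      refine Measurable.ite hA_meas ?_ measurable_const
      exact (measurable_const.div (hD_meas.comp measurable_snd)).mul
        (Measurable.ite (measurableSet_le measurable_const hgm) measurable_const
          measurable_const)
    have habs_sign : ∀ p : Ω × ℝ, |if 0 ≤ g p then (1:ℝ) else -1| = 1 := by
      intro p; split <;> norm_num
    have hw_bdd : ∀ p, |w p| ≤ γ / ε := by
      intro p
      by_cases hp : p ∈ A
      · rw [hw]; simp only [if_pos hp]
        rw [abs_mul, habs_sign, mul_one, abs_of_nonneg (div_nonneg hγ.le (hD_pos p.2).le)]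
        exact div_le_div_of_nonneg_left hγ.le hεR (le_max_right _ _)
      · rw [hw]; simp only [if_neg hp, abs_zero]
        positivity
    have hw_abs : ∀ t, (fun x => |w (x, t)|)
        = Set.indicator ((fun x => (x, t)) ⁻¹' A) (fun _ => γ / D t) := by
      intro t; funext x
      by_cases hx : (x, t) ∈ A
      · rw [Set.indicator_of_mem (show x ∈ (fun x => (x, t)) ⁻¹' A from hx), hw]
        simp only [if_pos hx]
        rw [abs_mul, habs_sign, mul_one, abs_of_nonneg (div_nonneg hγ.le (hD_pos t).le)]
      · rw [Set.indicator_of_notMem (show x ∉ (fun x => (x, t)) ⁻¹' A from hx), hw]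
        simp only [if_neg hx, abs_zero]
    have hw_slice_norm : ∀ t, ∫ x, |w (x, t)| ∂ν ≤ γ := by
      intro t
      rw [hw_abs t, integral_indicator_const _ (hA_meas.preimage measurable_prodMk_right),
        smul_eq_mul]
      calc (m t).toReal * (γ / D t) ≤ D t * (γ / D t) :=
            mul_le_mul_of_nonneg_right (le_max_left _ _)
              (div_nonneg hγ.le (hD_pos t).le)
        _ = γ := by field_simp [(hD_pos t).ne']
    have hF_int : Integrable (fun p => g p * w p) π := by
      refine Integrable.mono' (hg_int.abs.const_mul (γ / ε))
        (hgm.mul hw_meas).aestronglyMeasurable ?_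
      filter_upwards with p
      rw [Real.norm_eq_abs, abs_mul]
      calc |g p| * |w p| ≤ |g p| * (γ / ε) :=
            mul_le_mul_of_nonneg_left (hw_bdd p) (abs_nonneg _)
        _ = γ / ε * |g p| := mul_comm _ _
    have hS_int : Integrable (fun t => ∫ x, g (x, t) * f (x, t) ∂ν) ρ :=
      hgf_int.integral_prod_right
    have hI_int : Integrable (fun t => ∫ x, g (x, t) * w (x, t) ∂ν) ρ :=
      hF_int.integral_prod_right
    have hle : ∀ᵐ t ∂ρ, 0 ≤ (∫ x, g (x, t) * f (x, t) ∂ν) - ∫ x, g (x, t) * w (x, t) ∂ν := by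
      have := ae_nonneg_of_forall_setIntegral_nonneg (hS_int.sub hI_int) ?_
      · filter_upwards [this] with t ht using ht
      intro E hE _
      set u : Ω × ℝ → ℝ := fun p => if p.2 ∈ E then w p else f p with hu
      have hu_meas : Measurable u :=
        Measurable.ite (hE.preimage measurable_snd) hw_meas hfm
      have hu_ad' : ∀ᵐ t ∂ρ, ∫ x, |u (x, t)| ∂ν ≤ γ := by
        filter_upwards [hf_ad] with t ht
        by_cases htE : t ∈ E
        · have : (fun x => |u (x, t)|) = fun x => |w (x, t)| := by
            funext x; rw [hu]; simp only [if_pos htE]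
          rw [this]; exact hw_slice_norm t
        · have : (fun x => |u (x, t)|) = fun x => |f (x, t)| := by
            funext x; simp only [hu]; rw [if_neg htE]
          rw [this]; exact ht
      have h0 := hVI u hu_meas.aemeasurable hu_ad'
      have hcong : (fun p => mubar p * (u p - ubar p)) =ᵐ[π]
          Set.indicator (Prod.snd ⁻¹' E) (fun p => g p * w p - g p * f p) := by
        filter_upwards [hg_ae, hf_ae] with p h1 h2
        by_cases hp : p.2 ∈ E
        · rw [Set.indicator_of_mem (show p ∈ Prod.snd ⁻¹' E from hp)]
          simp only [hu]; rw [if_pos hp, h1, h2]; ring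
        · rw [Set.indicator_of_notMem (show p ∉ Prod.snd ⁻¹' E from hp)]
          simp only [hu]; rw [if_neg hp, h2]; ring
      have hInd_int : Integrable
          (Set.indicator (Prod.snd ⁻¹' E) (fun p => g p * w p - g p * f p)) π :=
        ((hF_int.sub hgf_int).indicator (hE.preimage measurable_snd))
      rw [integral_congr_ae hcong, hπdef, integral_prod_symm _ hInd_int] at h0
      have hinner : ∀ᵐ t ∂ρ,
          (∫ x, Set.indicator (Prod.snd ⁻¹' E) (fun p => g p * w p - g p * f p) (x, t) ∂ν)
          = Set.indicator E
              (fun t => (∫ x, g (x, t) * w (x, t) ∂ν) - ∫ x, g (x, t) * f (x, t) ∂ν) t := by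
        filter_upwards [h_slice_gf_int, hF_int.prod_left_ae] with t h1 h2
        by_cases htE : t ∈ E
        · rw [Set.indicator_of_mem htE]
          have heq : (fun x => Set.indicator (Prod.snd ⁻¹' E)
              (fun p => g p * w p - g p * f p) (x, t))
              = fun x => g (x, t) * w (x, t) - g (x, t) * f (x, t) := by
            funext x
            exact Set.indicator_of_mem (show ((x, t) : Ω × ℝ) ∈ Prod.snd ⁻¹' E from htE) _
          rw [heq, integral_sub h2 h1]
        · rw [Set.indicator_of_notMem htE]
          have heq : (fun x => Set.indicator (Prod.snd ⁻¹' E)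
              (fun p => g p * w p - g p * f p) (x, t)) = fun _ => (0:ℝ) := by
            funext x
            exact Set.indicator_of_notMem (show ((x, t) : Ω × ℝ) ∉ Prod.snd ⁻¹' E from htE) _
          rw [heq, integral_zero]
      rw [integral_congr_ae hinner, integral_indicator hE] at h0
      rw [integral_sub (hI_int.integrableOn) (hS_int.integrableOn)] at h0
      have hgoal : ∫ t in E, ((fun t => ∫ x, g (x, t) * f (x, t) ∂ν) -
          fun t => ∫ x, g (x, t) * w (x, t) ∂ν) t ∂ρ
          = (∫ t in E, (∫ x, g (x, t) * f (x, t) ∂ν) ∂ρ)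
            - ∫ t in E, (∫ x, g (x, t) * w (x, t) ∂ν) ∂ρ := by
        simp only [Pi.sub_apply]
        exact integral_sub (hS_int.integrableOn) (hI_int.integrableOn)
      rw [hgoal]
      linarith
    filter_upwards [hle, hF_int.prod_left_ae] with t ht hFt hmt
    have hmt' : (ε : ℝ) ≤ (m t).toReal := hmt
    have hDt : D t = (m t).toReal := max_eq_left hmt'
    have hmt_pos : 0 < (m t).toReal := lt_of_lt_of_le hεR hmt'
    have hlow : ∀ x, Set.indicator ((fun x => (x, t)) ⁻¹' A) (fun _ => γ / D t * q) x
        ≤ g (x, t) * w (x, t) := by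
      intro x
      by_cases hx : (x, t) ∈ A
      · rw [Set.indicator_of_mem (show x ∈ (fun x => (x, t)) ⁻¹' A from hx)]
        have hgw : g (x, t) * w (x, t) = γ / D t * |g (x, t)| := by
          rw [hw]; simp only [if_pos hx]
          by_cases hgx : 0 ≤ g (x, t)
          · rw [if_pos hgx, abs_of_nonneg hgx]; ring
          · rw [if_neg hgx, abs_of_neg (not_le.1 hgx)]; ring
        rw [hgw]
        exact mul_le_mul_of_nonneg_left (le_of_lt hx) (div_nonneg hγ.le (hD_pos t).le)
      · rw [Set.indicator_of_notMem (show x ∉ (fun x => (x, t)) ⁻¹' A from hx)]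
        have : w (x, t) = 0 := by rw [hw]; exact if_neg hx
        rw [this, mul_zero]
    have hγq : γ * q ≤ ∫ x, g (x, t) * w (x, t) ∂ν := by
      have hint_ind : Integrable
          (Set.indicator ((fun x => (x, t)) ⁻¹' A) (fun _ => γ / D t * (q:ℝ))) ν :=
        (integrable_const _).indicator (hA_meas.preimage measurable_prodMk_right)
      have h1 : ∫ x, Set.indicator ((fun x => (x, t)) ⁻¹' A) (fun _ => γ / D t * (q:ℝ)) x ∂ν
          = (m t).toReal * (γ / D t * q) := by
        rw [integral_indicator_const _ (hA_meas.preimage measurable_prodMk_right), smul_eq_mul]; rfl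
      have h2 : (m t).toReal * (γ / D t * q) = γ * q := by
        rw [hDt]; field_simp
      calc γ * q = ∫ x, Set.indicator ((fun x => (x, t)) ⁻¹' A) (fun _ => γ / D t * (q:ℝ)) x ∂ν := by
            rw [h1, h2]
        _ ≤ ∫ x, g (x, t) * w (x, t) ∂ν := integral_mono hint_ind hFt hlow
    linarith
  -- combine the countable family
  have key_all : ∀ᵐ t ∂ρ, ∀ q ε : ℚ, 0 < q → 0 < ε →
      ((ε : ℝ) ≤ (ν {x | (q : ℝ) < |g (x, t)|}).toReal →
        γ * q ≤ ∫ x, g (x, t) * f (x, t) ∂ν) := by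
    rw [ae_all_iff]; intro q
    rw [ae_all_iff]; intro ε
    by_cases hq : 0 < q
    · by_cases hε : 0 < ε
      · filter_upwards [key q ε hq hε] with t ht _ _ using ht
      · filter_upwards with t _ h using absurd h hε
    · filter_upwards with t h using absurd h hq
  -- conclude
  filter_upwards [key_all, h_slice_g_int, h_slice_gf_int, h_slice_g_eq, h_slice_f_eq]
    with t hkey hgint hgfint hgeq hfeq
  intro v hv hv_norm
  set St : ℝ := ∫ x, g (x, t) * f (x, t) ∂ν with hSt
  have hkey' : ∀ q : ℚ, 0 < q → ν {x | (q : ℝ) < |g (x, t)|} ≠ 0 → γ * q ≤ St := by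
    intro q hq hne
    have hpos : 0 < (ν {x | (q : ℝ) < |g (x, t)|}).toReal :=
      ENNReal.toReal_pos hne (measure_ne_top ν _)
    obtain ⟨ε, hε0, hεlt⟩ := exists_rat_btwn hpos
    have hε0' : 0 < ε := by exact_mod_cast hε0
    exact hkey q ε hq hε0' hεlt.le
  -- the set of rational essential bounds
  set goodQ : Set ℚ := {q | 0 < q ∧ ν {x | (q : ℝ) < |g (x, t)|} = 0} with hgoodQ
  have hgoodQ_ne : goodQ.Nonempty := by
    by_contra hne
    rw [Set.not_nonempty_iff_eq_empty] at hne
    obtain ⟨q, hq⟩ := exists_rat_gt (max 0 (St / γ))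
    have hq0 : 0 < q := by
      have : (0:ℝ) < q := lt_of_le_of_lt (le_max_left _ _) hq
      exact_mod_cast this
    have hqe : ν {x | (q : ℝ) < |g (x, t)|} ≠ 0 := by
      intro h0
      have : q ∈ goodQ := ⟨hq0, h0⟩
      rw [hne] at this; exact this
    have h1 : γ * q ≤ St := hkey' q hq0 hqe
    have h2 : St / γ < q := lt_of_le_of_lt (le_max_right _ _) hq
    rw [div_lt_iff₀ hγ] at h2
    nlinarith
  set cSet : Set ℝ := (fun q : ℚ => (q : ℝ)) '' goodQ with hcSet
  have hcSet_ne : cSet.Nonempty := hgoodQ_ne.image _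
  have hcSet_bdd : BddBelow cSet := by
    refine ⟨0, ?_⟩
    rintro x ⟨q, hq, rfl⟩
    simpa using (show (0:ℝ) ≤ (q:ℝ) by exact_mod_cast hq.1.le)
  set c : ℝ := sInf cSet with hc
  have hc0 : 0 ≤ c := le_csInf hcSet_ne (by rintro x ⟨q, hq, rfl⟩; simpa using (show (0:ℝ) ≤ (q:ℝ) by exact_mod_cast hq.1.le))
  have hbound : ∀ᵐ x ∂ν, |g (x, t)| ≤ c := by
    have hball : ∀ᵐ x ∂ν, ∀ q : ℚ, q ∈ goodQ → |g (x, t)| ≤ (q : ℝ) := by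
      rw [ae_ball_iff (Set.to_countable goodQ)]
      intro q hq
      have h0 : ν {x | (q : ℝ) < |g (x, t)|} = 0 := hq.2
      rw [← nonpos_iff_eq_zero] at h0
      refine (ae_iff.2 ?_)
      convert hq.2 using 2
      ext x; simp [not_le]
    filter_upwards [hball] with x hx
    exact le_csInf hcSet_ne (by rintro y ⟨q, hq, rfl⟩; exact hx q hq)
  have hγc : γ * c ≤ St := by
    rcases eq_or_lt_of_le hc0 with hc0' | hc0'
    · -- c = 0 : then g (·, t) = 0 a.e., so St = 0
      have hg0 : ∀ᵐ x ∂ν, g (x, t) = 0 := by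
        filter_upwards [hbound] with x hx
        rw [← hc0'] at hx
        exact abs_eq_zero.1 (le_antisymm hx (abs_nonneg _))
      have : St = 0 := by
        rw [hSt]
        rw [integral_congr_ae (g := fun _ => (0:ℝ)) ?_]
        · exact integral_zero _ _
        · filter_upwards [hg0] with x hx using by rw [hx, zero_mul]
      rw [this, ← hc0', mul_zero]
    · by_contra hlt
      push_neg at hlt
      have h2 : St / γ < c := by rwa [div_lt_iff₀ hγ, mul_comm]
      obtain ⟨q, hq1, hq2⟩ := exists_rat_btwn (max_lt h2 hc0')
      have hq0 : 0 < q := by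
        have : (0:ℝ) < q := lt_of_le_of_lt (le_max_right _ _) hq1
        exact_mod_cast this
      have hqn : q ∉ goodQ := by
        intro hqin
        have : c ≤ (q : ℝ) := csInf_le hcSet_bdd ⟨q, hqin, rfl⟩
        linarith
      have hqe : ν {x | (q : ℝ) < |g (x, t)|} ≠ 0 := by
        intro h0; exact hqn ⟨hq0, h0⟩
      have h3 : γ * q ≤ St := hkey' q hq0 hqe
      have h4 : St / γ < q := lt_of_le_of_lt (le_max_left _ _) hq1
      rw [div_lt_iff₀ hγ] at h4
      nlinarith
  -- integrability of g(·,t) * v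
  have hint_gv : Integrable (fun x => g (x, t) * v x) ν := by
    refine Integrable.mono' (hv.abs.const_mul c)
      (hgint.aestronglyMeasurable.mul hv.aestronglyMeasurable) ?_
    filter_upwards [hbound] with x hx
    rw [Real.norm_eq_abs, abs_mul]
    exact mul_le_mul_of_nonneg_right hx (abs_nonneg _)
  have h1 : ∫ x, g (x, t) * v x ∂ν ≤ γ * c := by
    have step1 : ∫ x, g (x, t) * v x ∂ν ≤ ∫ x, c * |v x| ∂ν := by
      refine integral_mono_ae hint_gv (hv.abs.const_mul c) ?_
      filter_upwards [hbound] with x hx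
      calc g (x, t) * v x ≤ |g (x, t) * v x| := le_abs_self _
        _ = |g (x, t)| * |v x| := abs_mul _ _
        _ ≤ c * |v x| := mul_le_mul_of_nonneg_right hx (abs_nonneg _)
    have step2 : ∫ x, c * |v x| ∂ν = c * ∫ x, |v x| ∂ν := integral_const_mul c _
    have step3 : c * ∫ x, |v x| ∂ν ≤ c * γ := mul_le_mul_of_nonneg_left hv_norm hc0
    calc ∫ x, g (x, t) * v x ∂ν ≤ c * ∫ x, |v x| ∂ν := by rw [← step2]; exact step1
      _ ≤ c * γ := step3
      _ = γ * c := mul_comm _ _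
  have hfinal : ∫ x, mubar (x, t) * (v x - ubar (x, t)) ∂ν
      = (∫ x, g (x, t) * v x ∂ν) - St := by
    have hcong : ∀ᵐ x ∂ν, mubar (x, t) * (v x - ubar (x, t))
        = g (x, t) * v x - g (x, t) * f (x, t) := by
      filter_upwards [hgeq, hfeq] with x h1' h2'
      rw [h1', h2']; ring
    rw [integral_congr_ae hcong, integral_sub hint_gv hgfint, hSt]
  rw [hfinal]
  linarith
end

section
/- Let ū ∈ U_ad and μ̄ ∈ L^∞(Q) satisfy ∫_Ω μ̄(t)(v − ū(t)) dx ≤ 0 for all v ∈ B_γ and a.a. t. If ‖ū(t)‖_{L¹(Ω)} = γ and μ̄(t) ≢ 0 in Ω, then supp(ū(t)) ⊂ {x ∈ Ω : |μ̄(x,t)| = ‖μ̄(t)‖_{L^∞(Ω)}}, i.e., |ū(x,t)| > 0 implies |μ̄(x,t)| = ‖μ̄(t)‖_{L^∞(Ω)} for a.a. x. -/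
open MeasureTheory Filter Topology Set
open scoped ENNReal

lemma key {Ω : Type*} [MeasurableSpace Ω] (ν : Measure Ω) [IsFiniteMeasure ν]
    {γ : ℝ} (hγ : 0 < γ) (u μ : Ω → ℝ)
    (hμm : AEStronglyMeasurable μ ν) (hμb : eLpNorm μ ⊤ ν < ⊤)
    (hμne : ¬ ∀ᵐ x ∂ν, μ x = 0)
    (hu : Integrable u ν) (huγ : ∫ x, |u x| ∂ν = γ)
    (hVI : ∀ v : Ω → ℝ, Integrable v ν → ∫ x, |v x| ∂ν ≤ γ →
      ∫ x, μ x * (v x - u x) ∂ν ≤ 0) :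
    ∀ᵐ x ∂ν, 0 < |u x| → |μ x| = (eLpNorm μ ⊤ ν).toReal := by
  set M : ℝ := (eLpNorm μ ⊤ ν).toReal with hM
  -- basic facts
  have hμbd : ∀ᵐ x ∂ν, |μ x| ≤ M := by
    filter_upwards [ae_le_eLpNormEssSup (f := μ) (μ := ν)] with x hx
    have h1 : ‖μ x‖ₑ ≤ eLpNorm μ ⊤ ν := by simpa [eLpNorm_exponent_top] using hx
    have := ENNReal.toReal_mono hμb.ne h1
    simpa [Real.norm_eq_abs, hM] using this
  have hMpos : 0 < M := by
    rcases lt_or_ge 0 M with h | h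
    · exact h
    · exfalso
      have hle : M = 0 := le_antisymm h ENNReal.toReal_nonneg
      have hM0 : eLpNorm μ ⊤ ν = 0 := by
        rcases (ENNReal.toReal_eq_zero_iff _).mp hle with h0 | htop
        · exact h0
        · exact absurd htop hμb.ne
      exact hμne ((eLpNorm_eq_zero_iff hμm (by simp)).mp hM0)
  -- replace μ by a strongly measurable representative
  set μ' : Ω → ℝ := hμm.mk μ with hμ'
  have hμ'sm : StronglyMeasurable μ' := hμm.stronglyMeasurable_mk
  have hμeq : μ =ᵐ[ν] μ' := hμm.ae_eq_mk
  have hμ'meas : Measurable μ' := hμ'sm.measurable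
  have hμ'bd : ∀ᵐ x ∂ν, |μ' x| ≤ M := by
    filter_upwards [hμbd, hμeq] with x h1 h2; rw [← h2]; exact h1
  -- integrability of μ' * u
  have hint_mu'u : Integrable (fun x => μ' x * u x) ν := by
    refine Integrable.mono' (hu.abs.const_mul M) (hμ'sm.aestronglyMeasurable.mul hu.1) ?_
    filter_upwards [hμ'bd] with x hx
    rw [Real.norm_eq_abs, abs_mul]
    exact mul_le_mul_of_nonneg_right hx (abs_nonneg _)
  set I : ℝ := ∫ x, μ' x * u x ∂ν with hI
  -- upper bound : I ≤ γ * M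
  have hupper : I ≤ γ * M := by
    have : I ≤ ∫ x, M * |u x| ∂ν := by
      refine integral_mono_ae hint_mu'u (hu.abs.const_mul M) ?_
      filter_upwards [hμ'bd] with x hx
      calc μ' x * u x ≤ |μ' x * u x| := le_abs_self _
        _ = |μ' x| * |u x| := abs_mul _ _
        _ ≤ M * |u x| := mul_le_mul_of_nonneg_right hx (abs_nonneg _)
    rwa [integral_const_mul, huγ, mul_comm] at this
  -- lower bound : ∀ ε > 0, γ * (M - ε) ≤ I
  have hlower : ∀ ε : ℝ, 0 < ε → γ * (M - ε) ≤ I := by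
    intro ε hε
    set A : Set Ω := {x | M - ε < |μ' x|} with hA
    have hAmeas : MeasurableSet A := measurableSet_lt measurable_const hμ'meas.abs
    have hApos : 0 < ν A := by
      rcases eq_zero_or_pos (ν A) with h0 | h
      · exfalso
        have hae : ∀ᵐ x ∂ν, |μ x| ≤ M - ε := by
          have : ∀ᵐ x ∂ν, x ∉ A := by
            rw [ae_iff]; simpa using h0
          filter_upwards [this, hμeq] with x hx he
          rw [he]; simpa [hA] using hx
        have hle : eLpNormEssSup μ ν ≤ ENNReal.ofReal (M - ε) :=
          eLpNormEssSup_le_of_ae_bound (by simpa [Real.norm_eq_abs] using hae)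
        have h2 : M ≤ (ENNReal.ofReal (M - ε)).toReal := by
          apply ENNReal.toReal_mono ENNReal.ofReal_ne_top
          simpa [eLpNorm_exponent_top] using hle
        rcases le_or_gt 0 (M - ε) with hc | hc
        · rw [ENNReal.toReal_ofReal hc] at h2; linarith
        · rw [ENNReal.ofReal_eq_zero.mpr (le_of_lt hc)] at h2
          simp at h2; linarith
      · exact h
    set r : ℝ := (ν A).toReal with hr
    have hrpos : 0 < r := ENNReal.toReal_pos hApos.ne' (measure_ne_top ν A)
    set s : Ω → ℝ := fun x => if 0 ≤ μ' x then (1 : ℝ) else -1 with hs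
    have hsmeas : Measurable s :=
      Measurable.ite (measurableSet_le measurable_const hμ'meas) measurable_const measurable_const
    have hsabs : ∀ x, |s x| = 1 := by
      intro x; by_cases h : 0 ≤ μ' x <;> simp [hs, h]
    set v : Ω → ℝ := fun x => (γ / r) * A.indicator s x with hv
    have hvmeas : Measurable v := (hsmeas.indicator hAmeas).const_mul _
    have hvbd : ∀ x, ‖v x‖ ≤ γ / r := by
      intro x
      rw [Real.norm_eq_abs, hv, abs_mul, abs_of_nonneg (le_of_lt (div_pos hγ hrpos))]
      by_cases h : x ∈ A
      · simp [Set.indicator_of_mem h, hsabs]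
      · simp [Set.indicator_of_notMem h, le_of_lt (div_pos hγ hrpos)]
    have hvint : Integrable v ν :=
      Integrable.mono' (integrable_const (γ / r)) hvmeas.aestronglyMeasurable
        (Eventually.of_forall hvbd)
    have hvnorm : ∫ x, |v x| ∂ν ≤ γ := by
      have h1 : ∫ x, |v x| ∂ν ≤ ∫ x, A.indicator (fun _ => γ / r) x ∂ν := by
        refine integral_mono hvint.abs ?_ ?_
        · exact (integrable_const (γ/r)).indicator hAmeas
        · intro x
          by_cases h : x ∈ A
          · rw [Set.indicator_of_mem h]
            simpa [Real.norm_eq_abs] using hvbd x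
          · simp only [Set.indicator_of_notMem h, hv]
            simp [Set.indicator_of_notMem h]
      have h2 : ∫ x, A.indicator (fun _ => γ / r) x ∂ν = (γ / r) * r := by
        rw [integral_indicator_const _ hAmeas]
        simp [hr, smul_eq_mul, mul_comm, measureReal_def]
      rw [h2] at h1
      rw [div_mul_cancel₀ _ hrpos.ne'] at h1
      exact h1
    -- μ' x * v x = (γ/r) * indicator A |μ'|
    have hmuv : ∀ x, μ' x * v x = (γ / r) * A.indicator (fun y => |μ' y|) x := by
      intro x
      by_cases h : x ∈ A
      · simp only [hv, Set.indicator_of_mem h]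
        by_cases h0 : 0 ≤ μ' x
        · simp [hs, h0, abs_of_nonneg h0]; ring
        · push_neg at h0
          simp [hs, not_le.mpr h0, abs_of_neg h0]; ring
      · simp [hv, Set.indicator_of_notMem h]
    -- |μ'| integrable
    have hmu'int : Integrable (fun x => |μ' x|) ν := by
      refine Integrable.mono' (integrable_const M) hμ'meas.abs.aestronglyMeasurable ?_
      filter_upwards [hμ'bd] with x hx; simpa [Real.norm_eq_abs, abs_abs] using hx
    have hsetlow : (M - ε) * r ≤ ∫ x in A, |μ' x| ∂ν := by
      have h1 : ∫ x in A, (M - ε) ∂ν ≤ ∫ x in A, |μ' x| ∂ν := by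
        refine setIntegral_mono_on ((integrableOn_const_iff).mpr (Or.inr (measure_lt_top ν A)))
          hmu'int.integrableOn hAmeas ?_
        intro x hx; exact le_of_lt hx
      rwa [setIntegral_const, smul_eq_mul, mul_comm] at h1
    have hIv : ∫ x, μ' x * v x ∂ν = (γ / r) * ∫ x in A, |μ' x| ∂ν := by
      simp_rw [hmuv]
      rw [integral_const_mul, ← integral_indicator hAmeas]
    have hvlow : γ * (M - ε) ≤ ∫ x, μ' x * v x ∂ν := by
      rw [hIv]
      calc γ * (M - ε) = (γ / r) * ((M - ε) * r) := by
            field_simp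
        _ ≤ (γ / r) * ∫ x in A, |μ' x| ∂ν :=
            mul_le_mul_of_nonneg_left hsetlow (le_of_lt (div_pos hγ hrpos))
    -- apply VI
    have hVIv : ∫ x, μ x * (v x - u x) ∂ν ≤ 0 := hVI v hvint hvnorm
    have hVIv' : ∫ x, μ' x * (v x - u x) ∂ν ≤ 0 := by
      rw [integral_congr_ae (g := fun x => μ x * (v x - u x)) ?_]
      · exact hVIv
      · filter_upwards [hμeq] with x hx; rw [hx]
    have hint_mu'v : Integrable (fun x => μ' x * v x) ν := by
      refine Integrable.mono' (integrable_const (M * (γ / r)))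
        (hμ'sm.aestronglyMeasurable.mul hvmeas.aestronglyMeasurable) ?_
      filter_upwards [hμ'bd] with x hx
      rw [Real.norm_eq_abs, abs_mul]
      exact mul_le_mul hx (hvbd x) (abs_nonneg _) (le_trans (abs_nonneg _) hx)
    have hsplit : ∫ x, μ' x * (v x - u x) ∂ν
        = (∫ x, μ' x * v x ∂ν) - ∫ x, μ' x * u x ∂ν := by
      rw [← integral_sub hint_mu'v hint_mu'u]
      congr 1; ext x; ring
    rw [hsplit] at hVIv'
    linarith
  -- I = γ * M
  have hIeq : I = γ * M := by
    refine le_antisymm hupper ?_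
    refine le_of_forall_pos_le_add ?_
    intro ε hε
    have := hlower (ε / γ) (div_pos hε hγ)
    have h2 : γ * (M - ε / γ) = γ * M - ε := by field_simp
    linarith
  -- nonnegative function with zero integral
  set g : Ω → ℝ := fun x => M * |u x| - μ' x * u x with hg
  have hgint : Integrable g ν := (hu.abs.const_mul M).sub hint_mu'u
  have hgnn : 0 ≤ᵐ[ν] g := by
    filter_upwards [hμ'bd] with x hx
    have : μ' x * u x ≤ M * |u x| :=
      calc μ' x * u x ≤ |μ' x * u x| := le_abs_self _
        _ = |μ' x| * |u x| := abs_mul _ _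
        _ ≤ M * |u x| := mul_le_mul_of_nonneg_right hx (abs_nonneg _)
    simpa [hg] using sub_nonneg.mpr this
  have hgzero : ∫ x, g x ∂ν = 0 := by
    rw [hg]
    rw [integral_sub (hu.abs.const_mul M) hint_mu'u]
    rw [integral_const_mul, huγ, ← hI, hIeq]
    ring
  have hgae : g =ᵐ[ν] 0 := by
    rw [← integral_eq_zero_iff_of_nonneg_ae hgnn hgint] ; exact hgzero
  filter_upwards [hgae, hμ'bd, hμeq] with x hzero hbd heq hpos
  have hxe : μ' x * u x = M * |u x| := by
    have : M * |u x| - μ' x * u x = 0 := hzero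
    linarith
  have h1 : M * |u x| ≤ |μ' x| * |u x| := by
    calc M * |u x| = μ' x * u x := hxe.symm
      _ ≤ |μ' x * u x| := le_abs_self _
      _ = |μ' x| * |u x| := abs_mul _ _
  have h2 : M ≤ |μ' x| := le_of_mul_le_mul_right h1 hpos
  rw [heq]
  exact le_antisymm hbd h2

section outer
variable {Ω : Type*} [MeasurableSpace Ω] (ν : Measure Ω) [IsFiniteMeasure ν]
  (T : ℝ) (mubar : Ω × ℝ → ℝ)

-- slicing a product-L∞ function
lemma slice_facts (hmu_inf : MemLp mubar ⊤ (ν.prod (volume.restrict (Set.Ioo (0:ℝ) T)))) :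
    ∀ᵐ t ∂(volume.restrict (Set.Ioo (0:ℝ) T)),
      AEStronglyMeasurable (fun x => mubar (x, t)) ν ∧
      eLpNorm (fun x => mubar (x, t)) ⊤ ν < ⊤ := by
  set lam := volume.restrict (Set.Ioo (0:ℝ) T) with hlam
  set P := ν.prod lam with hP
  set m : Ω × ℝ → ℝ := hmu_inf.1.mk mubar with hm
  have hmsm : StronglyMeasurable m := hmu_inf.1.stronglyMeasurable_mk
  set C : ℝ≥0∞ := eLpNormEssSup mubar P with hC
  have hClt : C < ⊤ := by
    have := hmu_inf.2
    rwa [eLpNorm_exponent_top] at this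
  have hb : ∀ᵐ z ∂P, mubar z = m z ∧ (‖mubar z‖₊ : ℝ≥0∞) ≤ C := by
    filter_upwards [hmu_inf.1.ae_eq_mk, ae_le_eLpNormEssSup (f := mubar) (μ := P)] with z h1 h2
    exact ⟨h1, h2⟩
  have hswap : MeasurePreserving Prod.swap (lam.prod ν) P :=
    Measure.measurePreserving_swap
  have hb' : ∀ᵐ w ∂(lam.prod ν),
      mubar w.swap = m w.swap ∧ (‖mubar w.swap‖₊ : ℝ≥0∞) ≤ C :=
    hswap.quasiMeasurePreserving.ae hb
  have hb'' : ∀ᵐ t ∂lam, ∀ᵐ x ∂ν,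
      mubar (x, t) = m (x, t) ∧ (‖mubar (x, t)‖₊ : ℝ≥0∞) ≤ C :=
    Measure.ae_ae_of_ae_prod hb'
  filter_upwards [hb''] with t ht
  have heq : (fun x => mubar (x, t)) =ᵐ[ν] fun x => m (x, t) := by
    filter_upwards [ht] with x hx; exact hx.1
  have hmt : StronglyMeasurable (fun x => m (x, t)) :=
    hmsm.comp_measurable (measurable_id.prodMk measurable_const)
  constructor
  · exact ⟨fun x => m (x, t), hmt, heq⟩
  · rw [eLpNorm_exponent_top]
    have : eLpNormEssSup (fun x => mubar (x, t)) ν ≤ C := by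
      refine essSup_le_of_ae_le _ ?_
      filter_upwards [ht] with x hx; exact hx.2
    exact lt_of_le_of_lt this hClt

end outer
/-- sparsity structure: where the constraint is active and the multiplier is
nontrivial, the support of `ū(t)` lies in the set where `|μ̄(·,t)|` attains its `L^∞` norm. -/
theorem support_structure_active_constraint
    {Ω : Type*} [MeasurableSpace Ω] (ν : Measure Ω) [IsFiniteMeasure ν]
    (T γ : ℝ) (hT : 0 < T) (hγ : 0 < γ)
    (ubar mubar : Ω × ℝ → ℝ)
    (hmu_inf : MemLp mubar ⊤ (ν.prod (volume.restrict (Set.Ioo (0:ℝ) T))))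
    (hu_ad : ∀ᵐ t ∂(volume.restrict (Set.Ioo (0:ℝ) T)),
      Integrable (fun x => ubar (x, t)) ν ∧ ∫ x, |ubar (x, t)| ∂ν ≤ γ)
    (hVI : ∀ᵐ t ∂(volume.restrict (Set.Ioo (0:ℝ) T)),
      ∀ v : Ω → ℝ, Integrable v ν → ∫ x, |v x| ∂ν ≤ γ →
        ∫ x, mubar (x, t) * (v x - ubar (x, t)) ∂ν ≤ 0) :
    ∀ᵐ t ∂(volume.restrict (Set.Ioo (0:ℝ) T)),
      ((∫ x, |ubar (x, t)| ∂ν) = γ ∧ ¬ (∀ᵐ x ∂ν, mubar (x, t) = 0)) →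
        ∀ᵐ x ∂ν, 0 < |ubar (x, t)| →
          |mubar (x, t)| = (eLpNorm (fun x => mubar (x, t)) ⊤ ν).toReal := by
  filter_upwards [slice_facts ν T mubar hmu_inf, hu_ad, hVI] with t hslice had hvi
  rintro ⟨hact, hne⟩
  exact key ν hγ _ _ hslice.1 hslice.2 hne had.1 hact hvi
end
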